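/- For every odd positive integer n, the sum over k from 0 to n of binomial(n,k)*binomial(n+k,k)*binomial(2k,k) / ((-4)^k * (k+1)^2) equals ((2n^2+2n-1)/(n+1)^2) * binomial(n-1,(n-1)/2)^2 / 16^((n-1)/2) (as rational numbers). -/

import Mathlib

set_option maxHeartbeats 2000000

def Fq (n k : ℕ) : ℚ :=
  (Nat.choose n k * Nat.choose (n + k) k * Nat.choose (2 * k) k : ℚ)
    / ((-4) ^ k * (k + 1) ^ 2)

def Gq (n k : ℕ) : ℚ :=
  (-2) * (2 * n + 3) / ((n + 1) * (n + 2)) * k * (Nat.choose (n + 2) k)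
    * (Nat.choose (n + k) k) * (Nat.choose (2 * k) k) / (-4) ^ k

lemma key (n k : ℕ) :
    -(n : ℚ) ^ 2 * Fq n k - (4 * n + 6) * Fq (n + 1) k + ((n : ℚ) + 3) ^ 2 * Fq (n + 2) k
      = Gq n (k + 1) - Gq n k := by
  rcases le_or_gt k n with h | h
  · obtain ⟨d, rfl⟩ := Nat.exists_eq_add_of_le h  -- n = k + d
    simp only [Fq, Gq]
    rw [Nat.cast_choose ℚ (show k ≤ k + d by omega),
        Nat.cast_choose ℚ (show k ≤ k + d + 1 by omega),
        Nat.cast_choose ℚ (show k ≤ k + d + 2 by omega),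
        Nat.cast_choose ℚ (show k ≤ k + d + k by omega),
        Nat.cast_choose ℚ (show k ≤ k + d + 1 + k by omega),
        Nat.cast_choose ℚ (show k ≤ k + d + 2 + k by omega),
        Nat.cast_choose ℚ (show k + 1 ≤ k + d + 2 by omega),
        Nat.cast_choose ℚ (show k + 1 ≤ k + d + (k + 1) by omega),
        Nat.cast_choose ℚ (show k ≤ 2 * k by omega),
        Nat.cast_choose ℚ (show k + 1 ≤ 2 * (k + 1) by omega)]
    have e1 : k + d - k = d := by omega
    have e2 : k + d + 1 - k = d + 1 := by omega
    have e3 : k + d + 2 - k = d + 2 := by omega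
    have e4 : k + d + k - k = k + d := by omega
    have e5 : k + d + 1 + k - k = k + d + 1 := by omega
    have e6 : k + d + 2 + k - k = k + d + 2 := by omega
    have e7 : k + d + 2 - (k + 1) = d + 1 := by omega
    have e8 : k + d + (k + 1) - (k + 1) = k + d := by omega
    have e9 : 2 * k - k = k := by omega
    have e10 : 2 * (k + 1) - (k + 1) = k + 1 := by omega
    have e11 : 2 * (k + 1) = 2 * k + 1 + 1 := by omega
    have e12 : k + d + (k + 1) = k + d + k + 1 := by omega
    have e13 : k + d + 1 + k = k + d + k + 1 := by omega
    have e14 : k + d + 2 + k = k + d + k + 1 + 1 := by omega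
    rw [e1, e2, e3, e4, e5, e6, e7, e8, e9, e10, e11, e12, e13, e14]
    simp only [Nat.factorial_succ]
    push_cast
    have hk : (k.factorial : ℚ) ≠ 0 := Nat.cast_ne_zero.mpr (Nat.factorial_ne_zero _)
    have hd : (d.factorial : ℚ) ≠ 0 := Nat.cast_ne_zero.mpr (Nat.factorial_ne_zero _)
    have hkd : ((k + d).factorial : ℚ) ≠ 0 := Nat.cast_ne_zero.mpr (Nat.factorial_ne_zero _)
    have hkdk : ((k + d + k).factorial : ℚ) ≠ 0 := Nat.cast_ne_zero.mpr (Nat.factorial_ne_zero _)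
    have h2k : ((2 * k).factorial : ℚ) ≠ 0 := Nat.cast_ne_zero.mpr (Nat.factorial_ne_zero _)
    have h4 : ((-4 : ℚ)) ^ k ≠ 0 := pow_ne_zero _ (by norm_num)
    have hk1 : ((k : ℚ) + 1) ≠ 0 := by positivity
    have hd1 : ((d : ℚ) + 1) ≠ 0 := by positivity
    have hd2 : ((d : ℚ) + 2) ≠ 0 := by positivity
    field_simp
    ring
  · have h3 : k = n + 1 ∨ k = n + 2 ∨ n + 3 ≤ k := by omega
    rcases h3 with rfl | rfl | h3
    · -- k = n + 1
      simp only [Fq, Gq]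
      rw [Nat.choose_eq_zero_of_lt (by omega : n < n + 1)]
      rw [show n + 1 + (n + 1) = 2 * n + 1 + 1 by ring, show 2 * (n + 1) = 2 * n + 1 + 1 by ring,
          show n + 2 + (n + 1) = 2 * n + 1 + 1 + 1 by ring,
          show n + (n + 1 + 1) = 2 * n + 1 + 1 by ring,
          show 2 * (n + 1 + 1) = 2 * n + 1 + 1 + 1 + 1 by ring,
          show n + (n + 1) = 2 * n + 1 by ring]
      rw [Nat.choose_self,
          Nat.cast_choose ℚ (show n + 1 ≤ 2 * n + 1 + 1 by omega),
          Nat.cast_choose ℚ (show n + 1 ≤ n + 2 by omega),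
          Nat.cast_choose ℚ (show n + 1 ≤ 2 * n + 1 + 1 + 1 by omega),
          Nat.cast_choose ℚ (show n + 1 + 1 ≤ n + 2 by omega),
          Nat.cast_choose ℚ (show n + 1 + 1 ≤ 2 * n + 1 + 1 by omega),
          Nat.cast_choose ℚ (show n + 1 + 1 ≤ 2 * n + 1 + 1 + 1 + 1 by omega),
          Nat.cast_choose ℚ (show n + 1 ≤ 2 * n + 1 by omega)]
      have e1 : 2 * n + 1 + 1 - (n + 1) = n + 1 := by omega
      have e2 : n + 2 - (n + 1) = 1 := by omega
      have e3 : 2 * n + 1 + 1 + 1 - (n + 1) = n + 1 + 1 := by omega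
      have e4 : n + 2 - (n + 1 + 1) = 0 := by omega
      have e5 : 2 * n + 1 + 1 - (n + 1 + 1) = n := by omega
      have e6 : 2 * n + 1 + 1 + 1 + 1 - (n + 1 + 1) = n + 1 + 1 := by omega
      have e7 : 2 * n + 1 - (n + 1) = n := by omega
      have e8 : n + 2 = n + 1 + 1 := by omega
      rw [e1, e2, e3, e4, e5, e6, e7, e8]
      simp only [Nat.factorial_succ, Nat.factorial_one, Nat.factorial_zero, pow_succ]
      push_cast
      have hn' : (n.factorial : ℚ) ≠ 0 := Nat.cast_ne_zero.mpr (Nat.factorial_ne_zero _)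
      have h2n : ((2 * n + 1).factorial : ℚ) ≠ 0 := Nat.cast_ne_zero.mpr (Nat.factorial_ne_zero _)
      have h4 : ((-4 : ℚ)) ^ n ≠ 0 := pow_ne_zero _ (by norm_num)
      have hn1 : ((n : ℚ) + 1) ≠ 0 := by positivity
      have hn2 : ((n : ℚ) + 2) ≠ 0 := by positivity
      field_simp
      ring
    · -- k = n + 2
      simp only [Fq, Gq]
      rw [Nat.choose_eq_zero_of_lt (by omega : n < n + 2),
          Nat.choose_eq_zero_of_lt (by omega : n + 1 < n + 2),
          Nat.choose_eq_zero_of_lt (by omega : n + 2 < n + 2 + 1)]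
      rw [show n + 2 + (n + 2) = 2 * n + 1 + 1 + 1 + 1 by ring,
          show 2 * (n + 2) = 2 * n + 1 + 1 + 1 + 1 by ring,
          show n + (n + 2 + 1) = 2 * n + 1 + 1 + 1 by ring,
          show 2 * (n + 2 + 1) = 2 * n + 1 + 1 + 1 + 1 + 1 + 1 by ring,
          show n + (n + 2) = 2 * n + 1 + 1 by ring]
      rw [Nat.choose_self,
          Nat.cast_choose ℚ (show n + 2 ≤ 2 * n + 1 + 1 + 1 + 1 by omega),
          Nat.cast_choose ℚ (show n + 2 ≤ 2 * n + 1 + 1 by omega)]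
      have e1 : 2 * n + 1 + 1 + 1 + 1 - (n + 2) = n + 1 + 1 := by omega
      have e2 : 2 * n + 1 + 1 - (n + 2) = n := by omega
      have e8 : n + 2 = n + 1 + 1 := by omega
      rw [e1, e2, e8]
      simp only [Nat.factorial_succ, pow_succ]
      push_cast
      have hn' : (n.factorial : ℚ) ≠ 0 := Nat.cast_ne_zero.mpr (Nat.factorial_ne_zero _)
      have h2n : ((2 * n + 1).factorial : ℚ) ≠ 0 := Nat.cast_ne_zero.mpr (Nat.factorial_ne_zero _)
      have h4 : ((-4 : ℚ)) ^ n ≠ 0 := pow_ne_zero _ (by norm_num)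
      have hn1 : ((n : ℚ) + 1) ≠ 0 := by positivity
      have hn2 : ((n : ℚ) + 2) ≠ 0 := by positivity
      field_simp
      ring
    · -- k ≥ n + 3
      simp only [Fq, Gq]
      rw [Nat.choose_eq_zero_of_lt (by omega : n < k),
          Nat.choose_eq_zero_of_lt (by omega : n + 1 < k),
          Nat.choose_eq_zero_of_lt (by omega : n + 2 < k),
          Nat.choose_eq_zero_of_lt (by omega : n + 2 < k + 1)]
      simp

def Sq (m : ℕ) : ℚ := ∑ k ∈ Finset.range (m + 1), Fq m k

lemma Fq_zero {m k : ℕ} (h : m < k) : Fq m k = 0 := by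
  simp [Fq, Nat.choose_eq_zero_of_lt h]

lemma Sq_ext (m N : ℕ) (h : m + 1 ≤ N) : Sq m = ∑ k ∈ Finset.range N, Fq m k := by
  rw [Sq]
  apply Finset.sum_subset (Finset.range_subset_range.mpr h)
  intro x _ hx
  simp only [Finset.mem_range, not_lt] at hx
  exact Fq_zero (by omega)

lemma recu (n : ℕ) :
    ((n : ℚ) + 3) ^ 2 * Sq (n + 2) = (4 * n + 6) * Sq (n + 1) + (n : ℚ) ^ 2 * Sq n := by
  have h0 : ∑ k ∈ Finset.range (n + 3),
      (-(n : ℚ) ^ 2 * Fq n k - (4 * n + 6) * Fq (n + 1) k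
        + ((n : ℚ) + 3) ^ 2 * Fq (n + 2) k)
      = Gq n (n + 3) - Gq n 0 := by
    rw [← Finset.sum_range_sub (fun k => Gq n k)]
    exact Finset.sum_congr rfl (fun k _ => key n k)
  have hG0 : Gq n 0 = 0 := by simp [Gq]
  have hGN : Gq n (n + 3) = 0 := by
    simp [Gq, Nat.choose_eq_zero_of_lt (show n + 2 < n + 3 by omega)]
  rw [hG0, hGN, sub_zero] at h0
  have hs : ∑ k ∈ Finset.range (n + 3),
      (-(n : ℚ) ^ 2 * Fq n k - (4 * n + 6) * Fq (n + 1) k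
        + ((n : ℚ) + 3) ^ 2 * Fq (n + 2) k)
      = -(n : ℚ) ^ 2 * Sq n - (4 * n + 6) * Sq (n + 1) + ((n : ℚ) + 3) ^ 2 * Sq (n + 2) := by
    rw [Sq_ext n (n + 3) (by omega), Sq_ext (n + 1) (n + 3) (by omega),
        Sq_ext (n + 2) (n + 3) (by omega)]
    rw [Finset.mul_sum, Finset.mul_sum, Finset.mul_sum, ← Finset.sum_sub_distrib,
        ← Finset.sum_add_distrib]
  rw [hs] at h0
  linarith

lemma Sq1 : Sq 1 = 3 / 4 := by
  simp only [Sq, Fq, Finset.sum_range_succ, Finset.sum_range_zero]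
  norm_num [Nat.choose]

lemma Sq2 : Sq 2 = 1 / 2 := by
  simp only [Sq, Fq, Finset.sum_range_succ, Finset.sum_range_zero]
  norm_num [Nat.choose]

lemma cb_step (m : ℕ) :
    ((2 * (m + 1)).choose (m + 1) : ℚ) = 2 * (2 * m + 1) * ((2 * m).choose m : ℚ) / (m + 1) := by
  have h := Nat.succ_mul_centralBinom_succ m
  simp only [Nat.centralBinom] at h
  have h' : ((m : ℚ) + 1) * ((2 * (m + 1)).choose (m + 1) : ℚ)
      = 2 * (2 * m + 1) * ((2 * m).choose m : ℚ) := by exact_mod_cast h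
  have hm : ((m : ℚ) + 1) ≠ 0 := by positivity
  field_simp
  linarith [h']

lemma pair (m : ℕ) :
    Sq (2 * m + 1) = (2 * (2 * (m : ℚ) + 1) ^ 2 + 2 * (2 * (m : ℚ) + 1) - 1)
        / (2 * (m : ℚ) + 2) ^ 2 * ((2 * m).choose m : ℚ) ^ 2 / 16 ^ m
      ∧ Sq (2 * m + 2) = 2 * ((2 * (m + 1)).choose (m + 1) : ℚ) ^ 2 / 16 ^ (m + 1) := by
  induction m with
  | zero =>
      constructor
      · rw [Sq1]; norm_num
      · rw [Sq2]; norm_num [Nat.choose]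
  | succ m ih =>
      obtain ⟨ih1, ih2⟩ := ih
      have hm1 : ((m : ℚ) + 1) ≠ 0 := by positivity
      have hm2 : ((m : ℚ) + 2) ≠ 0 := by positivity
      have h16 : ((16 : ℚ)) ^ m ≠ 0 := by positivity
      have hc1 := cb_step m
      have hc2 := cb_step (m + 1)
      push_cast at hc2
      have hr1 := recu (2 * m + 1)
      have hr2 := recu (2 * m + 2)
      rw [show 2 * m + 1 + 2 = 2 * (m + 1) + 1 by ring, show 2 * m + 1 + 1 = 2 * m + 2 by ring] at hr1
      rw [show 2 * m + 2 + 2 = 2 * (m + 1) + 2 by ring, show 2 * m + 2 + 1 = 2 * (m + 1) + 1 by ring] at hr2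
      push_cast at hr1 hr2
      have res1 : Sq (2 * (m + 1) + 1)
          = (2 * (2 * ((m : ℚ) + 1) + 1) ^ 2 + 2 * (2 * ((m : ℚ) + 1) + 1) - 1)
              / (2 * ((m : ℚ) + 1) + 2) ^ 2 * ((2 * (m + 1)).choose (m + 1) : ℚ) ^ 2
              / 16 ^ (m + 1) := by
        have h24 : ((2 * (m : ℚ) + 1) + 3) ^ 2 ≠ 0 := by positivity
        rw [ih1, ih2] at hr1
        rw [hc1] at hr1 ⊢
        have : Sq (2 * (m + 1) + 1)
            = ((4 * (2 * (m : ℚ) + 1) + 6) * (2 * (2 * (2 * (m : ℚ) + 1)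
                * ((2 * m).choose m : ℚ) / ((m : ℚ) + 1)) ^ 2 / 16 ^ (m + 1))
              + (2 * (m : ℚ) + 1) ^ 2 * ((2 * (2 * (m : ℚ) + 1) ^ 2 + 2 * (2 * (m : ℚ) + 1) - 1)
                / (2 * (m : ℚ) + 2) ^ 2 * ((2 * m).choose m : ℚ) ^ 2 / 16 ^ m))
              / ((2 * (m : ℚ) + 1) + 3) ^ 2 := by
          rw [eq_div_iff h24]
          linarith [hr1]
        rw [this, pow_succ]
        field_simp
        ring
      refine ⟨by exact_mod_cast res1, ?_⟩
      push_cast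
      have h25 : ((2 * (m : ℚ) + 2) + 3) ^ 2 ≠ 0 := by positivity
      rw [res1, ih2] at hr2
      rw [hc2]
      have : Sq (2 * (m + 1) + 2)
          = ((4 * (2 * (m : ℚ) + 2) + 6) * ((2 * (2 * ((m : ℚ) + 1) + 1) ^ 2
              + 2 * (2 * ((m : ℚ) + 1) + 1) - 1) / (2 * ((m : ℚ) + 1) + 2) ^ 2
              * ((2 * (m + 1)).choose (m + 1) : ℚ) ^ 2 / 16 ^ (m + 1))
            + (2 * (m : ℚ) + 2) ^ 2 * (2 * ((2 * (m + 1)).choose (m + 1) : ℚ) ^ 2 / 16 ^ (m + 1)))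
            / ((2 * (m : ℚ) + 2) + 3) ^ 2 := by
        rw [eq_div_iff h25]
        linarith [hr2]
      rw [this, pow_succ, pow_succ]
      push_cast
      field_simp
      ring

theorem id2_odd (n : ℕ) (hn : Odd n) (hn0 : 0 < n) :
    ∑ k ∈ Finset.range (n + 1),
        (Nat.choose n k * Nat.choose (n + k) k * Nat.choose (2 * k) k : ℚ)
          / ((-4) ^ k * (k + 1) ^ 2)
      = ((2 * (n : ℚ) ^ 2 + 2 * n - 1) / (n + 1) ^ 2)
          * (Nat.choose (n - 1) ((n - 1) / 2) : ℚ) ^ 2 / 16 ^ ((n - 1) / 2) := by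
  obtain ⟨m, rfl⟩ := hn
  have h := (pair m).1
  have hL : ∑ k ∈ Finset.range (2 * m + 1 + 1),
      (Nat.choose (2 * m + 1) k * Nat.choose (2 * m + 1 + k) k * Nat.choose (2 * k) k : ℚ)
        / ((-4) ^ k * (k + 1) ^ 2) = Sq (2 * m + 1) := rfl
  rw [hL, h, show 2 * m + 1 - 1 = 2 * m from rfl,
      Nat.mul_div_cancel_left m (by norm_num : 0 < 2)]
  push_cast
  ring
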